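/- If a channel's complementary channel is exactly constant on pure inputs, the channel is perfectly distance-preserving on pure states: let V : K ↪ B ⊗ F be an isometry with tr_B(Vφ V†) = σ for a fixed state σ and all pure states φ on K; then for all pure states φ, ψ on K, ‖tr_F(VφV†) − tr_F(VψV†)‖₁ = ‖φ − ψ‖₁. -/

import Mathlib

open Matrix
open scoped ComplexOrder
noncomputable section

/-- The positive semidefinite square root of a positive semidefinite matrix
(the definition of `Matrix.PosSemidef.sqrt` in the older Mathlib, which has since been removed). -/
def Matrix.PosSemidef.sqrt {n : Type*} [Fintype n] [DecidableEq n] {𝕜 : Type*} [RCLike 𝕜]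
    {A : Matrix n n 𝕜} (hA : A.PosSemidef) : Matrix n n 𝕜 :=
  (hA.1.eigenvectorUnitary : Matrix n n 𝕜) *
    diagonal (fun i => ((Real.sqrt (hA.1.eigenvalues i) : ℝ) : 𝕜)) *
    (star hA.1.eigenvectorUnitary : Matrix n n 𝕜)

/-- The trace norm `‖X‖₁ = tr √(XᴴX)`. -/
def traceNorm {ι : Type*} [Fintype ι] [DecidableEq ι] (X : Matrix ι ι ℂ) : ℝ :=
  ((Matrix.posSemidef_conjTranspose_mul_self X).sqrt.trace).re

/-- Rank-one (outer product) matrix `|v⟩⟨v|`. -/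
def outer {ι : Type*} [Fintype ι] (v : ι → ℂ) : Matrix ι ι ℂ :=
  Matrix.vecMulVec v (star v)

/-- Partial trace over the second tensor factor. -/
def ptrace₂ {ι κ : Type*} [Fintype ι] [Fintype κ]
    (M : Matrix (ι × κ) (ι × κ) ℂ) : Matrix ι ι ℂ :=
  Matrix.of fun i j => ∑ s, M (i, s) (j, s)

/-- Partial trace over the first tensor factor. -/
def ptrace₁ {ι κ : Type*} [Fintype ι] [Fintype κ]
    (M : Matrix (ι × κ) (ι × κ) ℂ) : Matrix κ κ ℂ :=
  Matrix.of fun s t => ∑ i, M (i, s) (i, t)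

lemma outer_apply {ι : Type*} [Fintype ι] (v : ι → ℂ) (i j : ι) :
    outer v i j = v i * (starRingEnd ℂ) (v j) := rfl

lemma outer_hermitian {ι : Type*} [Fintype ι] (v : ι → ℂ) : (outer v).IsHermitian := by
  ext i j
  simp [outer, Matrix.conjTranspose_apply, vecMulVec_apply, mul_comm, Pi.star_apply]

lemma outer_posSemidef {ι : Type*} [Fintype ι] (v : ι → ℂ) : (outer v).PosSemidef := by
  refine Matrix.PosSemidef.of_dotProduct_mulVec_nonneg (outer_hermitian v) fun x => ?_
  have : dotProduct (star x) (outer v *ᵥ x)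
      = (starRingEnd ℂ) (∑ i, (starRingEnd ℂ) (v i) * x i) * (∑ i, (starRingEnd ℂ) (v i) * x i) := by
    simp only [dotProduct, Matrix.mulVec, dotProduct, outer_apply, Pi.star_apply,
      map_sum (starRingEnd ℂ), map_mul (starRingEnd ℂ), Complex.conj_conj, Finset.mul_sum,
      Finset.sum_mul_sum, Complex.star_def]
    rw [Finset.sum_comm]
    refine Finset.sum_congr rfl fun j _ => ?_
    rw [Finset.sum_mul]
    exact Finset.sum_congr rfl fun i _ => by ring
  rw [this, Complex.conj_mul']
  positivity

open scoped MatrixOrder in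
lemma Matrix.PosSemidef.sqrt_eq_cfc_sqrt {n : Type*} [Fintype n] [DecidableEq n]
    {A : Matrix n n ℂ} (hA : A.PosSemidef) : hA.sqrt = CFC.sqrt A := by
  rw [CFC.sqrt_eq_cfc, cfc_nnreal_eq_real _ A hA.nonneg, hA.1.cfc_eq, Matrix.IsHermitian.cfc,
    Unitary.conjStarAlgAut_apply, Matrix.PosSemidef.sqrt]
  congr 2
  ext i j
  simp [Matrix.diagonal_apply, Real.coe_toNNReal', max_eq_left (hA.eigenvalues_nonneg i)]

open scoped MatrixOrder in
lemma Matrix.PosSemidef.eq_sqrt_of_sq_eq {n : Type*} [Fintype n] [DecidableEq n]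
    {B : Matrix n n ℂ} (hB : B.PosSemidef) {A : Matrix n n ℂ} (hA : A.PosSemidef)
    (h : B ^ 2 = A) : B = hA.sqrt := by
  rw [hA.sqrt_eq_cfc_sqrt]
  exact (CFC.sqrt_unique (by rw [← sq, h]) hB.nonneg).symm

section aux
variable {ι : Type*} [Fintype ι] [DecidableEq ι] {n : ℕ}

lemma herm_realSum (ρ : Fin n → Matrix ι ι ℂ) (hρ : ∀ i, (ρ i).IsHermitian) (d : Fin n → ℝ) :
    (∑ i, (d i : ℂ) • ρ i).IsHermitian := by
  show _ = _
  rw [conjTranspose_sum]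
  refine Finset.sum_congr rfl fun i _ => ?_
  rw [conjTranspose_smul, (hρ i).eq]
  simp [Complex.star_def, Complex.conj_ofReal]

lemma prod_realSum (ρ : Fin n → Matrix ι ι ℂ)
    (horth : ∀ i j, i ≠ j → ρ i * ρ j = 0) (d e : Fin n → ℝ) :
    (∑ i, (d i : ℂ) • ρ i) * (∑ j, (e j : ℂ) • ρ j)
      = ∑ i, ((d i * e i : ℝ) : ℂ) • (ρ i * ρ i) := by
  rw [Finset.sum_mul]
  refine Finset.sum_congr rfl fun i _ => ?_
  rw [Finset.mul_sum]
  rw [Finset.sum_eq_single i]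
  · rw [smul_mul_smul_comm]; push_cast; ring_nf
  · intro j _ hj
    rw [smul_mul_smul_comm, horth i j (Ne.symm hj), smul_zero]
  · simp

lemma traceNorm_sum_orth (ρ : Fin n → Matrix ι ι ℂ) (hρ : ∀ i, (ρ i).PosSemidef)
    (horth : ∀ i j, i ≠ j → ρ i * ρ j = 0) (c : Fin n → ℝ) :
    traceNorm (∑ i, (c i : ℂ) • ρ i) = ∑ i, |c i| * ((ρ i).trace).re := by
  set A := ∑ i, (c i : ℂ) • ρ i with hAdef
  set S := ∑ i, ((|c i| : ℝ) : ℂ) • ρ i with hSdef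
  have hSps : S.PosSemidef := by
    refine Matrix.PosSemidef.of_dotProduct_mulVec_nonneg (herm_realSum ρ (fun i => (hρ i).1) _) fun x => ?_
    have h0 : S *ᵥ x = ∑ i, ((|c i| : ℝ) : ℂ) • (ρ i *ᵥ x) := by
      rw [hSdef]
      exact (map_sum (Matrix.mulVec.addMonoidHomLeft x) (fun i => ((|c i| : ℝ) : ℂ) • ρ i)
        Finset.univ).trans (Finset.sum_congr rfl fun i _ => Matrix.smul_mulVec _ _ _)
    have h1 : dotProduct (star x) (S *ᵥ x)
        = ∑ i, ((|c i| : ℝ) : ℂ) * dotProduct (star x) (ρ i *ᵥ x) := by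
      rw [h0]
      simp only [dotProduct, Finset.sum_apply, Finset.mul_sum, Pi.smul_apply, smul_eq_mul]
      rw [Finset.sum_comm]
      exact Finset.sum_congr rfl fun i _ => Finset.sum_congr rfl fun a _ => by ring
    rw [h1]
    refine Finset.sum_nonneg fun i _ => mul_nonneg ?_ ((hρ i).dotProduct_mulVec_nonneg x)
    exact_mod_cast Complex.zero_le_real.2 (abs_nonneg _)
  have hsq : S ^ 2 = Aᴴ * A := by
    rw [(herm_realSum ρ (fun i => (hρ i).1) c).eq, pow_two, hSdef, hAdef,
      prod_realSum ρ horth, prod_realSum ρ horth]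
    simp [abs_mul_abs_self]
  have hsqrt : (Matrix.posSemidef_conjTranspose_mul_self A).sqrt = S :=
    (hSps.eq_sqrt_of_sq_eq _ hsq).symm
  rw [traceNorm, hsqrt, hSdef, Matrix.trace_sum, Complex.re_sum]
  refine Finset.sum_congr rfl fun i _ => ?_
  rw [Matrix.trace_smul, smul_eq_mul, Complex.re_ofReal_mul]

/-- cross-term vanishing from the constancy of the complementary channel -/
lemma cross_zero {k b f : ℕ} (V : Matrix (Fin b × Fin f) (Fin k) ℂ)
    (σ : Matrix (Fin f) (Fin f) ℂ)
    (hconst : ∀ φ : Fin k → ℂ, (∑ i, ‖φ i‖ ^ 2) = 1 →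
      ptrace₁ (outer (V *ᵥ φ)) = σ)
    (x y : Fin k → ℂ) (hx : (∑ i, ‖x i‖ ^ 2) = 1)
    (hy : (∑ i, ‖y i‖ ^ 2) = 1)
    (hxy : ∑ i, (starRingEnd ℂ) (x i) * y i = 0) (s t : Fin f) :
    ∑ i, (V *ᵥ x) (i, s) * (starRingEnd ℂ) ((V *ᵥ y) (i, t)) = 0 := by
  set X := V *ᵥ x with hX
  set Y := V *ᵥ y with hYdef
  have hform : ∀ (z : Fin k → ℂ) (hz : (∑ i, ‖z i‖ ^ 2) = 1) (s t : Fin f),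
      ∑ i, (V *ᵥ z) (i, s) * (starRingEnd ℂ) ((V *ᵥ z) (i, t)) = σ s t := by
    intro z hz s t
    have h := hconst z hz
    calc ∑ i, (V *ᵥ z) (i, s) * (starRingEnd ℂ) ((V *ᵥ z) (i, t))
        = ptrace₁ (outer (V *ᵥ z)) s t := by
          simp [ptrace₁, outer, vecMulVec_apply, Pi.star_apply, Complex.star_def]
      _ = σ s t := by rw [h]
  have hxx := hform x hx
  have hyy := hform y hy
  have hyx0 : ∑ i, x i * (starRingEnd ℂ) (y i) = 0 := by
    have := congrArg (starRingEnd ℂ) hxy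
    simpa [map_sum, mul_comm] using this
  have hs2 : (Real.sqrt 2 : ℂ) * (Real.sqrt 2 : ℂ) = 2 := by
    rw [← Complex.ofReal_mul, Real.mul_self_sqrt (by norm_num)]
    norm_num
  have hc : ((Real.sqrt 2)⁻¹ : ℂ) * ((Real.sqrt 2)⁻¹ : ℂ) = 1 / 2 := by
    push_cast
    rw [← mul_inv, hs2]
    norm_num
  -- norm of z₁ = c • (x + y)
  have hnorm : ∀ w : Fin k → ℂ, (∑ i, ‖w i‖ ^ 2 : ℝ)
      = ∑ i, Complex.normSq (w i) := by
    intro w; exact Finset.sum_congr rfl fun i _ => Complex.sq_norm _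
  have hz₁ : (∑ i, ‖(((Real.sqrt 2)⁻¹ : ℂ) • (x + y)) i‖ ^ 2) = 1 := by
    rw [hnorm]
    simp only [Pi.smul_apply, Pi.add_apply, smul_eq_mul, Complex.normSq_mul,
      Complex.normSq_add, Complex.normSq_ofReal]
    rw [← Finset.mul_sum]
    have h1 : ∑ i, (Complex.normSq (x i) + Complex.normSq (y i)
        + 2 * (x i * (starRingEnd ℂ) (y i)).re)
        = 1 + 1 + 2 * (∑ i, x i * (starRingEnd ℂ) (y i)).re := by
      rw [Finset.sum_add_distrib, Finset.sum_add_distrib, ← hnorm x, ← hnorm y, hx, hy,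
        ← Finset.mul_sum, ← Complex.re_sum]
    rw [h1, hyx0]
    simp [Real.sq_sqrt]
    norm_num
  set c : ℂ := ((Real.sqrt 2)⁻¹ : ℂ) with hcdef
  -- first equation from z₁ = c • (x + y)
  have hmv1 : V *ᵥ (c • (x + y)) = c • (X + Y) := by
    rw [Matrix.mulVec_smul, Matrix.mulVec_add]
  have E1 := hform _ hz₁ s t
  rw [hmv1] at E1
  have expand1 : ∀ i : Fin b, (c • (X + Y)) (i, s) * (starRingEnd ℂ) ((c • (X + Y)) (i, t))
      = (1/2 : ℂ) * (X (i,s) * (starRingEnd ℂ) (X (i,t)) + Y (i,s) * (starRingEnd ℂ) (Y (i,t))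
        + X (i,s) * (starRingEnd ℂ) (Y (i,t)) + Y (i,s) * (starRingEnd ℂ) (X (i,t))) := by
    intro i
    simp only [Pi.smul_apply, Pi.add_apply, smul_eq_mul, _root_.map_mul, _root_.map_add, map_inv₀,
      Complex.conj_ofReal, hcdef]
    linear_combination ((X (i,s) + Y (i,s)) * ((starRingEnd ℂ) (X (i,t))
      + (starRingEnd ℂ) (Y (i,t)))) * hc
  rw [Finset.sum_congr rfl (fun i _ => expand1 i), ← Finset.mul_sum] at E1
  rw [Finset.sum_add_distrib, Finset.sum_add_distrib, Finset.sum_add_distrib,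
    hxx s t, hyy s t] at E1
  -- second equation from z₂ = c • (x + I • y)
  have hIy : ∑ i, x i * (starRingEnd ℂ) (Complex.I * y i) = 0 := by
    simp only [_root_.map_mul, Complex.conj_I]
    have : ∀ i : Fin k, x i * (-Complex.I * (starRingEnd ℂ) (y i))
        = -Complex.I * (x i * (starRingEnd ℂ) (y i)) := fun i => by ring
    rw [Finset.sum_congr rfl (fun i _ => this i), ← Finset.mul_sum, hyx0, mul_zero]
  have hz₂ : (∑ i, ‖(c • (x + Complex.I • y)) i‖ ^ 2) = 1 := by
    rw [hnorm]
    simp only [Pi.smul_apply, Pi.add_apply, smul_eq_mul, Complex.normSq_mul,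
      Complex.normSq_add, Complex.normSq_ofReal, hcdef]
    rw [← Finset.mul_sum]
    have h1 : ∑ i, (Complex.normSq (x i) + Complex.normSq Complex.I * Complex.normSq (y i)
        + 2 * (x i * (starRingEnd ℂ) (Complex.I * y i)).re)
          = 1 + 1 + 2 * (∑ i, x i * (starRingEnd ℂ) (Complex.I * y i)).re := by
      rw [Finset.sum_add_distrib, Finset.sum_add_distrib, ← hnorm x]
      simp only [Complex.normSq_I, one_mul]
      rw [← hnorm y, hx, hy, ← Finset.mul_sum, ← Complex.re_sum]
    rw [h1, hIy]
    simp [Real.sq_sqrt]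
    norm_num
  have hmv2 : V *ᵥ (c • (x + Complex.I • y)) = c • (X + Complex.I • Y) := by
    rw [Matrix.mulVec_smul, Matrix.mulVec_add, Matrix.mulVec_smul]
  have E2 := hform _ hz₂ s t
  rw [hmv2] at E2
  have expand2 : ∀ i : Fin b,
      (c • (X + Complex.I • Y)) (i, s) * (starRingEnd ℂ) ((c • (X + Complex.I • Y)) (i, t))
      = (1/2 : ℂ) * (X (i,s) * (starRingEnd ℂ) (X (i,t)) + Y (i,s) * (starRingEnd ℂ) (Y (i,t))
        - Complex.I * (X (i,s) * (starRingEnd ℂ) (Y (i,t)))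
        + Complex.I * (Y (i,s) * (starRingEnd ℂ) (X (i,t)))) := by
    intro i
    simp only [Pi.smul_apply, Pi.add_apply, smul_eq_mul, _root_.map_mul, _root_.map_add, map_inv₀,
      Complex.conj_ofReal, Complex.conj_I, hcdef]
    linear_combination ((X (i,s) * (starRingEnd ℂ) (X (i,t))
      + Y (i,s) * (starRingEnd ℂ) (Y (i,t))
      - Complex.I * (X (i,s) * (starRingEnd ℂ) (Y (i,t)))
      + Complex.I * (Y (i,s) * (starRingEnd ℂ) (X (i,t))))) * hc
      - (((Real.sqrt 2 : ℂ))⁻¹ * ((Real.sqrt 2 : ℂ))⁻¹ * Y (i,s)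
        * (starRingEnd ℂ) (Y (i,t))) * Complex.I_mul_I
  rw [Finset.sum_congr rfl (fun i _ => expand2 i), ← Finset.mul_sum] at E2
  rw [Finset.sum_add_distrib, Finset.sum_sub_distrib, Finset.sum_add_distrib,
    ← Finset.mul_sum, ← Finset.mul_sum, hxx s t, hyy s t] at E2
  -- combine
  have h3 : (∑ i, X (i,s) * (starRingEnd ℂ) (Y (i,t)))
      + (∑ i, Y (i,s) * (starRingEnd ℂ) (X (i,t))) = 0 := by
    linear_combination 2 * E1
  have h4 : Complex.I * (∑ i, Y (i,s) * (starRingEnd ℂ) (X (i,t)))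
      - Complex.I * (∑ i, X (i,s) * (starRingEnd ℂ) (Y (i,t))) = 0 := by
    linear_combination 2 * E2
  have h5 : (∑ i, Y (i,s) * (starRingEnd ℂ) (X (i,t)))
      - (∑ i, X (i,s) * (starRingEnd ℂ) (Y (i,t))) = 0 := by
    linear_combination (-Complex.I) * h4 + ((∑ i, Y (i,s) * (starRingEnd ℂ) (X (i,t)))
      - (∑ i, X (i,s) * (starRingEnd ℂ) (Y (i,t)))) * Complex.I_mul_I
  linear_combination (h3 - h5) / 2

lemma ptrace₂_outer_eq_sum {ι κ : Type*} [Fintype ι] [Fintype κ] (u : ι × κ → ℂ) :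
    ptrace₂ (outer u) = ∑ s, outer (fun i => u (i, s)) := by
  ext i j
  simp [ptrace₂, outer, vecMulVec_apply, Matrix.sum_apply]

lemma ptrace₂_outer_mul_eq_zero {ι κ : Type*} [Fintype ι] [Fintype κ]
    (X Y : ι × κ → ℂ)
    (h : ∀ s t, ∑ m, (starRingEnd ℂ) (X (m, s)) * Y (m, t) = 0) :
    ptrace₂ (outer X) * ptrace₂ (outer Y) = 0 := by
  ext i j
  simp only [Matrix.mul_apply, ptrace₂, outer, Matrix.of_apply, vecMulVec_apply,
    Pi.star_apply, Complex.star_def, Matrix.zero_apply]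
  have key : ∀ m, (∑ s, X (i,s) * (starRingEnd ℂ) (X (m,s)))
        * (∑ t, Y (m,t) * (starRingEnd ℂ) (Y (j,t)))
      = ∑ s, ∑ t, (X (i,s) * (starRingEnd ℂ) (Y (j,t)))
        * ((starRingEnd ℂ) (X (m,s)) * Y (m,t)) := by
    intro m
    rw [Finset.sum_mul_sum]
    exact Finset.sum_congr rfl fun s _ => Finset.sum_congr rfl fun t _ => by ring
  rw [Finset.sum_congr rfl (fun m _ => key m), Finset.sum_comm]
  refine Finset.sum_eq_zero fun s _ => ?_
  rw [Finset.sum_comm]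
  refine Finset.sum_eq_zero fun t _ => ?_
  rw [← Finset.mul_sum, h s t, mul_zero]

lemma outer_mul_outer_eq_zero {ι : Type*} [Fintype ι] (u w : ι → ℂ)
    (h : ∑ a, (starRingEnd ℂ) (u a) * w a = 0) : outer u * outer w = 0 := by
  ext i j
  simp only [Matrix.mul_apply, outer_apply, Matrix.zero_apply]
  have : ∀ m, u i * (starRingEnd ℂ) (u m) * (w m * (starRingEnd ℂ) (w j))
      = (u i * (starRingEnd ℂ) (w j)) * ((starRingEnd ℂ) (u m) * w m) := fun m => by ring
  rw [Finset.sum_congr rfl (fun m _ => this m), ← Finset.mul_sum, h, mul_zero]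

lemma sum_mul_conj_self {ι : Type*} [Fintype ι] (u : ι → ℂ)
    (h : ∑ a, ‖u a‖ ^ 2 = 1) :
    ∑ a, u a * (starRingEnd ℂ) (u a) = 1 := by
  have h1 : ∀ a, u a * (starRingEnd ℂ) (u a) = ((‖u a‖ ^ 2 : ℝ) : ℂ) :=
    fun a => by rw [Complex.mul_conj, Complex.sq_norm]
  rw [Finset.sum_congr rfl (fun a _ => h1 a), ← Complex.ofReal_sum, h]
  norm_num

lemma trace_outer {ι : Type*} [Fintype ι] [DecidableEq ι] (u : ι → ℂ) :
    (outer u).trace = ∑ a, u a * (starRingEnd ℂ) (u a) := by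
  simp [Matrix.trace, Matrix.diag, outer_apply]

lemma trace_ptrace₂_outer {ι κ : Type*} [Fintype ι] [Fintype κ] [DecidableEq ι]
    (u : ι × κ → ℂ) :
    (ptrace₂ (outer u)).trace = ∑ p : ι × κ, u p * (starRingEnd ℂ) (u p) := by
  rw [Fintype.sum_prod_type]
  simp [Matrix.trace, Matrix.diag, ptrace₂, outer, vecMulVec_apply]

lemma outer_mulVec {m n : Type*} [Fintype m] [Fintype n] (M : Matrix m n ℂ) (x : n → ℂ) :
    outer (M *ᵥ x) = M * outer x * Mᴴ := by
  ext a c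
  simp only [outer_apply, Matrix.mul_apply, Matrix.conjTranspose_apply, Matrix.mulVec,
    dotProduct, map_sum (starRingEnd ℂ), _root_.map_mul, Finset.sum_mul_sum,
    Complex.star_def]
  rw [Finset.sum_comm]
  refine Finset.sum_congr rfl fun q _ => ?_
  rw [Finset.sum_mul]
  exact Finset.sum_congr rfl fun p _ => by ring

lemma ptrace₂_sub {ι κ : Type*} [Fintype ι] [Fintype κ]
    (M N : Matrix (ι × κ) (ι × κ) ℂ) : ptrace₂ (M - N) = ptrace₂ M - ptrace₂ N := by
  ext i j
  simp [ptrace₂, Finset.sum_sub_distrib]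

lemma ptrace₂_sum_smul {ι κ : Type*} [Fintype ι] [Fintype κ] {n : ℕ}
    (c : Fin n → ℂ) (M : Fin n → Matrix (ι × κ) (ι × κ) ℂ) :
    ptrace₂ (∑ i, c i • M i) = ∑ i, c i • ptrace₂ (M i) := by
  ext a d
  simp only [ptrace₂, Matrix.of_apply, Matrix.sum_apply, Matrix.smul_apply, smul_eq_mul,
    Finset.mul_sum]
  rw [Finset.sum_comm]

lemma herm_spectral_sum {m : Type*} [Fintype m] [DecidableEq m] {D : Matrix m m ℂ}
    (hD : D.IsHermitian) :
    D = ∑ i, ((hD.eigenvalues i : ℝ) : ℂ)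
      • outer (fun a => (hD.eigenvectorUnitary : Matrix m m ℂ) a i) := by
  conv_lhs => rw [hD.spectral_theorem, Unitary.conjStarAlgAut_apply]
  ext a c
  simp only [Matrix.mul_apply, Matrix.sum_apply, Matrix.smul_apply, outer_apply, smul_eq_mul,
    Matrix.star_apply, Matrix.diagonal_apply, Function.comp_apply, Finset.sum_ite_eq,
    Finset.mem_univ, if_true, Complex.star_def]
  simp only [mul_ite, mul_zero, Finset.sum_ite_eq', Finset.mem_univ, if_true]
  exact Finset.sum_congr rfl fun x _ => by push_cast [RCLike.ofReal_alg, Complex.real_smul]; ring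


lemma ptrace₂_outer_posSemidef {ι κ : Type*} [Fintype ι] [Fintype κ] [DecidableEq ι]
    (u : ι × κ → ℂ) : (ptrace₂ (outer u)).PosSemidef := by
  rw [ptrace₂_outer_eq_sum]
  exact Finset.sum_induction _ _ (fun a b ha hb => ha.add hb) Matrix.PosSemidef.zero
    (fun s _ => outer_posSemidef _)

/-- If the complementary channel is exactly constant on pure inputs
(`tr_B(VφV†) = σ` for all pure `φ`), then the channel is perfectly distance-preserving
on pure states: `‖tr_F(VφV†) − tr_F(VψV†)‖₁ = ‖φ − ψ‖₁`. -/
theorem exact_decoupling_preserves_distance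
    {k b f : ℕ} (V : Matrix (Fin b × Fin f) (Fin k) ℂ) (hV : Vᴴ * V = 1)
    (σ : Matrix (Fin f) (Fin f) ℂ)
    (hconst : ∀ φ : Fin k → ℂ, (∑ i, ‖φ i‖ ^ 2) = 1 →
      ptrace₁ (outer (V *ᵥ φ)) = σ) :
    ∀ φ ψ : Fin k → ℂ, (∑ i, ‖φ i‖ ^ 2) = 1 →
      (∑ i, ‖ψ i‖ ^ 2) = 1 →
      traceNorm (ptrace₂ (outer (V *ᵥ φ)) - ptrace₂ (outer (V *ᵥ ψ))) =
        traceNorm (outer φ - outer ψ) := by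
  intro φ ψ hφ hψ
  have hDh : (outer φ - outer ψ).IsHermitian := (outer_hermitian φ).sub (outer_hermitian ψ)
  set U : Matrix (Fin k) (Fin k) ℂ := (hDh.eigenvectorUnitary : Matrix (Fin k) (Fin k) ℂ)
    with hUdef
  set lam : Fin k → ℝ := hDh.eigenvalues with hlamdef
  set v : Fin k → Fin k → ℂ := fun i a => U a i with hvdef
  have hUU : star U * U = 1 := Matrix.mem_unitaryGroup_iff'.mp hDh.eigenvectorUnitary.2
  have hUU' : ∀ i j, (∑ a, (starRingEnd ℂ) (v i a) * v j a) = if i = j then 1 else 0 := by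
    intro i j
    have h := congrFun (congrFun (congrArg (fun M a b => M a b) hUU) i) j
    simpa [Matrix.mul_apply, Matrix.star_apply, Matrix.one_apply, Complex.star_def, hvdef]
      using h
  have hvnorm : ∀ i, (∑ a, ‖v i a‖ ^ 2) = 1 := by
    intro i
    have h := hUU' i i
    simp only [if_true] at h
    have h2 : ∀ a, ((‖v i a‖ ^ 2 : ℝ) : ℂ) = (starRingEnd ℂ) (v i a) * v i a :=
      fun a => by rw [Complex.sq_norm, Complex.normSq_eq_conj_mul_self]
    have h3 : ((∑ a, ‖v i a‖ ^ 2 : ℝ) : ℂ) = 1 := by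
      rw [Complex.ofReal_sum]
      rw [Finset.sum_congr rfl (fun a _ => h2 a)]
      simpa using h
    exact_mod_cast h3
  have hvorth : ∀ i j, i ≠ j → (∑ a, (starRingEnd ℂ) (v i a) * v j a) = 0 := by
    intro i j hij
    simpa [hij] using hUU' i j
  have hspec : outer φ - outer ψ = ∑ i, ((lam i : ℝ) : ℂ) • outer (v i) := by
    have := herm_spectral_sum hDh
    convert this using 2
  -- the image matrices
  set ρ : Fin k → Matrix (Fin b) (Fin b) ℂ := fun i => ptrace₂ (outer (V *ᵥ v i)) with hρdef
  have hL : ptrace₂ (outer (V *ᵥ φ)) - ptrace₂ (outer (V *ᵥ ψ))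
      = ∑ i, ((lam i : ℝ) : ℂ) • ρ i := by
    rw [← ptrace₂_sub, ← ptrace₂_sum_smul]
    congr 1
    rw [outer_mulVec, outer_mulVec]
    have h4 : ∀ i : Fin k, outer (V *ᵥ v i) = V * outer (v i) * Vᴴ :=
      fun i => outer_mulVec V (v i)
    rw [Finset.sum_congr rfl (fun i _ => by rw [h4 i])]
    have h5 : V * outer φ * Vᴴ - V * outer ψ * Vᴴ = V * (outer φ - outer ψ) * Vᴴ := by
      rw [Matrix.mul_sub, Matrix.sub_mul]
    rw [h5, hspec, Matrix.mul_sum, Matrix.sum_mul]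
    exact (Finset.sum_congr rfl fun i _ => by
      rw [Matrix.mul_smul, Matrix.smul_mul])
  -- orthogonality of image states
  have himorth : ∀ i j, i ≠ j → ρ i * ρ j = 0 := by
    intro i j hij
    refine ptrace₂_outer_mul_eq_zero _ _ fun s t => ?_
    have h6 := cross_zero V σ hconst (v i) (v j) (hvnorm i) (hvnorm j) (hvorth i j hij) s t
    have h7 := congrArg (starRingEnd ℂ) h6
    simpa [map_sum (starRingEnd ℂ), _root_.map_mul, mul_comm] using h7
  -- traces of image states
  have htr : ∀ i, ((ρ i).trace).re = 1 := by
    intro i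
    have hdot : dotProduct (star (V *ᵥ v i)) (V *ᵥ v i)
        = dotProduct (star (v i)) (v i) := by
      rw [Matrix.star_mulVec, dotProduct_mulVec, Matrix.vecMul_vecMul, hV,
        Matrix.vecMul_one]
    have h8 : (ρ i).trace = 1 := by
      rw [hρdef]
      simp only
      rw [trace_ptrace₂_outer]
      have h9 : ∑ p : Fin b × Fin f, (V *ᵥ v i) p * (starRingEnd ℂ) ((V *ᵥ v i) p)
          = dotProduct (star (V *ᵥ v i)) (V *ᵥ v i) := by
        simp [dotProduct, Pi.star_apply, Complex.star_def, mul_comm]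
      rw [h9, hdot]
      have h10 : dotProduct (star (v i)) (v i)
          = ∑ a, v i a * (starRingEnd ℂ) (v i a) := by
        simp [dotProduct, Pi.star_apply, Complex.star_def, mul_comm]
      rw [h10, sum_mul_conj_self _ (hvnorm i)]
    rw [h8]
    norm_num
  -- compute both trace norms
  rw [hL, hspec]
  rw [traceNorm_sum_orth ρ (fun i => ptrace₂_outer_posSemidef _) himorth lam]
  rw [traceNorm_sum_orth (fun i => outer (v i)) (fun i => outer_posSemidef _)
    (fun i j hij => outer_mul_outer_eq_zero _ _ (hvorth i j hij)) lam]
  refine Finset.sum_congr rfl fun i _ => ?_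
  rw [htr i, trace_outer, sum_mul_conj_self _ (hvnorm i)]
  norm_num
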